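/- Assume the setting, with W𝟏 = 𝟏 (each row of W sums to 1). Fix x̄ ∈ ℝ^{n₁} and Λ̄ = (λ̄_1,…,λ̄_m) ∈ (ℝ^{n₂})^m. Suppose Ȳ = (ȳ_1,…,ȳ_m) ∈ (ℝ^{n₂})^m satisfies: (a) Φ((x̄,…,x̄), Λ̄, Ȳ) ≥ Φ((x̄,…,x̄), Λ̄, Y) for every Y ∈ (ℝ^{n₂})^m; and (b) there are vectors ξ̄_1,…,ξ̄_m ∈ ℝ^{n₂} such that each ξ̄_i is a subgradient of h at ȳ_i (h(z) ≥ h(ȳ_i) + ⟨ξ̄_i, z − ȳ_i⟩ for all z) and (1/m)(∇_y f_i(x̄, ȳ_i) − ξ̄_i) = (L/(2√m)) Σ_{j=1}^m (w_{ji} − δ_{ij}) λ̄_j for every i. Let ŷ be a maximizer of y ↦ (1/m) Σ_{i=1}^m f_i(x̄, y) − h(y) over ℝ^{n₂}, and set ȳ_avg = (1/m) Σ_{i=1}^m ȳ_i. Then (μ/2) ‖ŷ − ȳ_avg‖² ≤ (L/(2m)) Σ_{i=1}^m ‖ȳ_i − ȳ_avg‖² + (1/m) Σ_{i=1}^m (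 h(ȳ_avg) − h(ȳ_i) − ⟨ξ̄_i, ȳ_avg − ȳ_i⟩ ). -/

import Mathlib

open scoped BigOperators RealInnerProductSpace

/-- The function `Φ(X, Λ, Y)` of the reformulated decentralized minimax problem. -/
noncomputable def Phi {m n₁ n₂ : ℕ} (L : ℝ)
    (f : Fin m → EuclideanSpace ℝ (Fin n₁) → EuclideanSpace ℝ (Fin n₂) → ℝ)
    (h : EuclideanSpace ℝ (Fin n₂) → ℝ) (w : Fin m → Fin m → ℝ)
    (X : Fin m → EuclideanSpace ℝ (Fin n₁))
    (Λ Y : Fin m → EuclideanSpace ℝ (Fin n₂)) : ℝ :=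
  (1 / (m : ℝ)) * ∑ i, (f i (X i) (Y i) - h (Y i))
    - (L / (2 * Real.sqrt (m : ℝ))) *
        ∑ i, ⟪Λ i, ∑ j, (w i j - if i = j then 1 else 0) • Y j⟫

lemma taylor_upper {E : Type*} [NormedAddCommGroup E] [InnerProductSpace ℝ E]
    [CompleteSpace E]
    (F : E → ℝ) (G : E → E) (c L' : ℝ)
    (hG : ∀ z, HasGradientAt F (G z) z)
    (hLipG : ∀ p q, ‖G p - G q‖ ≤ L' * ‖p - q‖)
    (hc : ∀ p q, ⟪G p - G q, p - q⟫ ≤ c * ‖p - q‖ ^ 2)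
    (a b : E) :
    F b ≤ F a + ⟪G a, b - a⟫ + c / 2 * ‖b - a‖ ^ 2 := by
  set v := b - a with hv
  have hGcont : Continuous G := by
    have : LipschitzWith (Real.toNNReal L') G := by
      apply LipschitzWith.of_dist_le_mul
      intro p q
      rw [dist_eq_norm, dist_eq_norm, Real.coe_toNNReal']
      exact (hLipG p q).trans (by
        have := norm_nonneg (p - q)
        nlinarith [le_max_left L' 0, le_max_right L' (0:ℝ)])
    exact this.continuous
  have hline : ∀ t : ℝ, HasDerivAt (fun s : ℝ => F (a + s • v)) ⟪G (a + t • v), v⟫ t := by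
    intro t
    have h1 : HasDerivAt (fun s : ℝ => a + s • v) v t := by
      simpa using ((hasDerivAt_id t).smul_const v).const_add a
    have h2 := (hG (a + t • v)).hasFDerivAt
    have := h2.comp_hasDerivAt t h1
    exact (by simpa using this : HasDerivAt (F ∘ fun s : ℝ => a + s • v) ⟪G (a + t • v), v⟫ t)
  have hcont : Continuous fun t : ℝ => ⟪G (a + t • v), v⟫ := by
    apply Continuous.inner
    · exact hGcont.comp (by continuity)
    · exact continuous_const
  have hftc : ∫ t in (0:ℝ)..1, ⟪G (a + t • v), v⟫ = F b - F a := by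
    have := intervalIntegral.integral_eq_sub_of_hasDerivAt
      (fun t _ => hline t) (hcont.intervalIntegrable 0 1)
    simpa [hv] using this
  have hmono : ∫ t in (0:ℝ)..1, ⟪G (a + t • v), v⟫
      ≤ ∫ t in (0:ℝ)..1, (⟪G a, v⟫ + c * t * ‖v‖ ^ 2) := by
    apply intervalIntegral.integral_mono_on zero_le_one
      (hcont.intervalIntegrable 0 1)
      ((by continuity : Continuous fun t : ℝ => (⟪G a, v⟫ + c * t * ‖v‖ ^ 2)).intervalIntegrable 0 1)
    intro t ht
    rcases eq_or_lt_of_le ht.1 with h0 | h0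
    · simp [← h0]
    · have hkey := hc (a + t • v) a
      have heq : a + t • v - a = t • v := by abel
      rw [heq] at hkey
      have : ⟪G (a + t • v) - G a, t • v⟫ = t * ⟪G (a + t • v) - G a, v⟫ :=
        real_inner_smul_right _ _ _
      rw [this, norm_smul] at hkey
      have hinner : ⟪G (a + t • v), v⟫ = ⟪G a, v⟫ + ⟪G (a + t • v) - G a, v⟫ := by
        rw [inner_sub_left]; ring
      rw [hinner]
      have habs : ‖t‖ = t := by rw [Real.norm_eq_abs, abs_of_pos h0]
      rw [habs] at hkey
      nlinarith [hkey, h0]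
  have hint : ∫ t in (0:ℝ)..1, (⟪G a, v⟫ + c * t * ‖v‖ ^ 2)
      = ⟪G a, v⟫ + c / 2 * ‖v‖ ^ 2 := by
    have h1 : IntervalIntegrable (fun _ : ℝ => ⟪G a, v⟫) MeasureTheory.volume 0 1 :=
      (continuous_const).intervalIntegrable 0 1
    have h2 : IntervalIntegrable (fun t : ℝ => c * t * ‖v‖ ^ 2) MeasureTheory.volume 0 1 :=
      (by continuity : Continuous fun t : ℝ => c * t * ‖v‖ ^ 2).intervalIntegrable 0 1
    rw [intervalIntegral.integral_add h1 h2]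
    have h3 : (fun t : ℝ => c * t * ‖v‖ ^ 2) = fun t : ℝ => (c * ‖v‖ ^ 2) * t := by
      funext t; ring
    rw [h3, intervalIntegral.integral_const_mul]
    simp [integral_id]
    ring
  rw [hftc] at hmono
  rw [hint] at hmono
  linarith

set_option maxHeartbeats 1000000 in
/-- Key inequality relating the dual consensus error of a stationary
point of the reformulation to the distance of the averaged dual variable from the exact
maximizer of the original problem:
`(μ/2)‖ŷ − ȳ_avg‖² ≤ (L/(2m)) Σ_i ‖ȳ_i − ȳ_avg‖²
  + (1/m) Σ_i (h(ȳ_avg) − h(ȳ_i) − ⟨ξ̄_i, ȳ_avg − ȳ_i⟩)`. -/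
theorem dgdmax_dual_consensus_to_original_gap
    {m n₁ n₂ : ℕ} (hm : 0 < m) (hn₁ : 0 < n₁) (hn₂ : 0 < n₂)
    (L μ : ℝ) (hμ : 0 < μ) (hLμ : μ ≤ L)
    (f : Fin m → EuclideanSpace ℝ (Fin n₁) → EuclideanSpace ℝ (Fin n₂) → ℝ)
    (Gx : Fin m → EuclideanSpace ℝ (Fin n₁) → EuclideanSpace ℝ (Fin n₂) →
      EuclideanSpace ℝ (Fin n₁))
    (Gy : Fin m → EuclideanSpace ℝ (Fin n₁) → EuclideanSpace ℝ (Fin n₂) →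
      EuclideanSpace ℝ (Fin n₂))
    (hGx : ∀ i x y, HasGradientAt (fun x' => f i x' y) (Gx i x y) x)
    (hGy : ∀ i x y, HasGradientAt (fun y' => f i x y') (Gy i x y) y)
    (hLip : ∀ i x y x' y',
      ‖Gx i x y - Gx i x' y'‖ ^ 2 + ‖Gy i x y - Gy i x' y'‖ ^ 2
        ≤ L ^ 2 * (‖x - x'‖ ^ 2 + ‖y - y'‖ ^ 2))
    (hconc : ∀ i x y y', ⟪y - y', Gy i x y - Gy i x y'⟫ ≤ -μ * ‖y - y'‖ ^ 2)
    (h : EuclideanSpace ℝ (Fin n₂) → ℝ) (hconv : ConvexOn ℝ Set.univ h)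
    (w : Fin m → Fin m → ℝ) (hrow : ∀ i, ∑ j, w i j = 1)
    (xb : EuclideanSpace ℝ (Fin n₁))
    (Lamb Yb : Fin m → EuclideanSpace ℝ (Fin n₂))
    (hmax : ∀ Y : Fin m → EuclideanSpace ℝ (Fin n₂),
      Phi L f h w (fun _ => xb) Lamb Y ≤ Phi L f h w (fun _ => xb) Lamb Yb)
    (ξ : Fin m → EuclideanSpace ℝ (Fin n₂))
    (hsub : ∀ i, ∀ z, h (Yb i) + ⟪ξ i, z - Yb i⟫ ≤ h z)
    (hstat : ∀ i, (1 / (m : ℝ)) • (Gy i xb (Yb i) - ξ i)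
        = (L / (2 * Real.sqrt (m : ℝ))) •
            ∑ j, (w j i - if i = j then 1 else 0) • Lamb j)
    (yh : EuclideanSpace ℝ (Fin n₂))
    (hyh : ∀ y : EuclideanSpace ℝ (Fin n₂),
      (1 / (m : ℝ)) * ∑ i, f i xb y - h y ≤ (1 / (m : ℝ)) * ∑ i, f i xb yh - h yh) :
    (μ / 2) * ‖yh - (1 / (m : ℝ)) • ∑ i, Yb i‖ ^ 2
      ≤ (L / (2 * (m : ℝ))) * ∑ i, ‖Yb i - (1 / (m : ℝ)) • ∑ k, Yb k‖ ^ 2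
        + (1 / (m : ℝ)) *
            ∑ i, (h ((1 / (m : ℝ)) • ∑ k, Yb k) - h (Yb i)
              - ⟪ξ i, (1 / (m : ℝ)) • (∑ k, Yb k) - Yb i⟫) := by
  have hm' : (0:ℝ) < m := Nat.cast_pos.mpr hm
  have hm0 : (m:ℝ) ≠ 0 := ne_of_gt hm'
  have hL : (0:ℝ) < L := lt_of_lt_of_le hμ hLμ
  set ybar : EuclideanSpace ℝ (Fin n₂) := (1 / (m : ℝ)) • ∑ k, Yb k with hybar
  -- Lipschitz bound for the y-gradient at fixed xb
  have hGlip : ∀ i (p q : EuclideanSpace ℝ (Fin n₂)),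
      ‖Gy i xb p - Gy i xb q‖ ≤ L * ‖p - q‖ := by
    intro i p q
    have h1 := hLip i xb p xb q
    simp only [sub_self, norm_zero] at h1
    nlinarith [norm_nonneg (Gy i xb p - Gy i xb q), norm_nonneg (p - q),
      sq_nonneg (‖Gx i xb p - Gx i xb q‖), mul_nonneg hL.le (norm_nonneg (p - q))]
  -- strong concavity (descent-type) upper bound
  have hsconc : ∀ i (a b : EuclideanSpace ℝ (Fin n₂)),
      f i xb b ≤ f i xb a + ⟪Gy i xb a, b - a⟫ - μ / 2 * ‖b - a‖ ^ 2 := by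
    intro i a b
    have := taylor_upper (fun y => f i xb y) (fun y => Gy i xb y) (-μ) L
      (fun z => hGy i xb z) (hGlip i)
      (fun p q => by
        have := hconc i xb p q
        rw [real_inner_comm]
        linarith [this]) a b
    linarith [this]
  -- smoothness lower bound
  have hdesc : ∀ i (a b : EuclideanSpace ℝ (Fin n₂)),
      f i xb a + ⟪Gy i xb a, b - a⟫ - L / 2 * ‖b - a‖ ^ 2 ≤ f i xb b := by
    intro i a b
    have hGneg : ∀ z, HasGradientAt (fun y => -(f i xb y)) (-(Gy i xb z)) z := by
      intro z
      have h1 := (hGy i xb z).hasFDerivAt.neg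
      rw [hasGradientAt_iff_hasFDerivAt]
      convert h1 using 1
      ext u
      simp
      · rfl
      · rfl
      exact map_neg (InnerProductSpace.toDual ℝ (EuclideanSpace ℝ (Fin n₂))) (Gy i xb z)
    have := taylor_upper (fun y => -(f i xb y)) (fun y => -(Gy i xb y)) L L
      hGneg
      (fun p q => by
        rw [show -Gy i xb p - -Gy i xb q = -(Gy i xb p - Gy i xb q) by abel, norm_neg]
        exact hGlip i p q)
      (fun p q => by
        rw [show -Gy i xb p - -Gy i xb q = -(Gy i xb p - Gy i xb q) by abel]
        calc ⟪-(Gy i xb p - Gy i xb q), p - q⟫ ≤ ‖-(Gy i xb p - Gy i xb q)‖ * ‖p - q‖ :=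
              real_inner_le_norm _ _
          _ ≤ L * ‖p - q‖ * ‖p - q‖ := by
              rw [norm_neg]
              exact mul_le_mul_of_nonneg_right (hGlip i p q) (norm_nonneg _)
          _ = L * ‖p - q‖ ^ 2 := by ring) a b
    simp only [inner_neg_left] at this
    linarith [this]
  set S : ℝ := L / (2 * Real.sqrt (m : ℝ)) with hS
  have hδ : ∀ (i j : Fin m), (if j = i then (1:ℝ) else 0) = (if i = j then 1 else 0) := by
    intro i j; simp [eq_comm]
  -- Phi at a consensus point
  have hPhiConst : ∀ y : EuclideanSpace ℝ (Fin n₂),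
      Phi L f h w (fun _ => xb) Lamb (fun _ => y)
        = (1 / (m : ℝ)) * ∑ i, f i xb y - h y := by
    intro y
    have hcoef : ∀ i : Fin m, ∑ j, (w i j - if i = j then (1:ℝ) else 0) = 0 := by
      intro i
      rw [Finset.sum_sub_distrib, hrow i]
      simp
    have hzero : ∀ i : Fin m, ∑ j, (w i j - if i = j then (1:ℝ) else 0) • y = 0 := by
      intro i
      rw [← Finset.sum_smul, hcoef i, zero_smul]
    unfold Phi
    simp only [hzero, inner_zero_right, Finset.sum_const_zero, mul_zero, sub_zero]
    rw [Finset.sum_sub_distrib, Finset.sum_const, Finset.card_univ, Fintype.card_fin]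
    field_simp
    rw [nsmul_eq_mul]
  -- the dual linear term at Yb
  have hlin : S * ∑ i, ⟪Lamb i, ∑ j, (w i j - if i = j then (1:ℝ) else 0) • Yb j⟫
      = (1 / (m : ℝ)) * ∑ j, ⟪Gy j xb (Yb j) - ξ j, Yb j⟫ := by
    have step1 : ∀ i : Fin m, ⟪Lamb i, ∑ j, (w i j - if i = j then (1:ℝ) else 0) • Yb j⟫
        = ∑ j, (w i j - if i = j then (1:ℝ) else 0) * ⟪Lamb i, Yb j⟫ := by
      intro i
      rw [inner_sum]
      exact Finset.sum_congr rfl fun j _ => real_inner_smul_right _ _ _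
    calc S * ∑ i, ⟪Lamb i, ∑ j, (w i j - if i = j then (1:ℝ) else 0) • Yb j⟫
        = S * ∑ i, ∑ j, (w i j - if i = j then (1:ℝ) else 0) * ⟪Lamb i, Yb j⟫ := by
          rw [Finset.sum_congr rfl fun i _ => step1 i]
      _ = ∑ j, ⟪S • ∑ i, (w i j - if j = i then (1:ℝ) else 0) • Lamb i, Yb j⟫ := by
          rw [Finset.sum_comm, Finset.mul_sum]
          refine Finset.sum_congr rfl fun j _ => ?_
          simp only [hδ, real_inner_smul_left, sum_inner, Finset.mul_sum]
      _ = ∑ j, ⟪(1 / (m : ℝ)) • (Gy j xb (Yb j) - ξ j), Yb j⟫ := by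
          refine Finset.sum_congr rfl fun j _ => ?_
          rw [hstat j]
      _ = (1 / (m : ℝ)) * ∑ j, ⟪Gy j xb (Yb j) - ξ j, Yb j⟫ := by
          rw [Finset.mul_sum]
          exact Finset.sum_congr rfl fun j _ => (real_inner_smul_left _ _ _)
  -- the stationarity residuals sum to zero
  have hzero : ∑ j, (1 / (m : ℝ)) • (Gy j xb (Yb j) - ξ j)
      = (0 : EuclideanSpace ℝ (Fin n₂)) := by
    simp only [hstat]
    rw [← Finset.smul_sum, Finset.sum_comm]
    have : ∀ i : Fin m, ∑ j, (w i j - if j = i then (1:ℝ) else 0) • Lamb i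
        = (0 : EuclideanSpace ℝ (Fin n₂)) := by
      intro i
      rw [← Finset.sum_smul]
      have : ∑ j, (w i j - if j = i then (1:ℝ) else 0) = 0 := by
        rw [Finset.sum_sub_distrib, hrow i]
        simp
      rw [this, zero_smul]
    rw [Finset.sum_congr rfl fun i _ => this i]
    simp
  -- hence the residuals pair to zero against ybar
  have hzero2 : ∑ i, ⟪Gy i xb (Yb i) - ξ i, ybar⟫ = (0:ℝ) := by
    have h1 : ∑ i, (Gy i xb (Yb i) - ξ i) = (0 : EuclideanSpace ℝ (Fin n₂)) := by
      have h2 : (1 / (m : ℝ)) • ∑ i, (Gy i xb (Yb i) - ξ i)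
          = (0 : EuclideanSpace ℝ (Fin n₂)) := by
        rw [Finset.smul_sum]; exact hzero
      have h3 := smul_eq_zero.mp h2
      rcases h3 with h3 | h3
      · exact absurd h3 (by positivity)
      · exact h3
    rw [← sum_inner, h1, inner_zero_left]
  -- Phi at Yb
  have hPhiYb : Phi L f h w (fun _ => xb) Lamb Yb
      = (1 / (m : ℝ)) * ∑ i, (f i xb (Yb i) - h (Yb i))
        - (1 / (m : ℝ)) * ∑ i, ⟪Gy i xb (Yb i) - ξ i, Yb i - ybar⟫ := by
    have hshift : ∑ i, ⟪Gy i xb (Yb i) - ξ i, Yb i - ybar⟫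
        = ∑ i, ⟪Gy i xb (Yb i) - ξ i, Yb i⟫ := by
      have : ∀ i : Fin m, ⟪Gy i xb (Yb i) - ξ i, Yb i - ybar⟫
          = ⟪Gy i xb (Yb i) - ξ i, Yb i⟫ - ⟪Gy i xb (Yb i) - ξ i, ybar⟫ := by
        intro i; rw [inner_sub_right]
      rw [Finset.sum_congr rfl fun i _ => this i, Finset.sum_sub_distrib, hzero2, sub_zero]
    rw [hshift]
    unfold Phi
    rw [hlin]
  -- the gap bound
  have hgap : (1 / (m : ℝ)) * ∑ i, f i xb yh - h yh
      ≤ ((1 / (m : ℝ)) * ∑ i, f i xb ybar - h ybar)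
        + ((L / (2 * (m : ℝ))) * ∑ i, ‖Yb i - ybar‖ ^ 2
          + (1 / (m : ℝ)) * ∑ i, (h ybar - h (Yb i) - ⟪ξ i, ybar - Yb i⟫)) := by
    have h1 : (1 / (m : ℝ)) * ∑ i, f i xb yh - h yh
        ≤ Phi L f h w (fun _ => xb) Lamb Yb := by
      rw [← hPhiConst yh]; exact hmax _
    have hper : ∀ i : Fin m, f i xb (Yb i) - h (Yb i) - ⟪Gy i xb (Yb i) - ξ i, Yb i - ybar⟫
        ≤ f i xb ybar - h ybar + L / 2 * ‖Yb i - ybar‖ ^ 2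
          + (h ybar - h (Yb i) - ⟪ξ i, ybar - Yb i⟫) := by
      intro i
      have hd := hdesc i (Yb i) ybar
      have e1 : ⟪Gy i xb (Yb i) - ξ i, Yb i - ybar⟫
          = ⟪Gy i xb (Yb i), Yb i - ybar⟫ - ⟪ξ i, Yb i - ybar⟫ := inner_sub_left _ _ _
      have e2 : ⟪Gy i xb (Yb i), ybar - Yb i⟫ = -⟪Gy i xb (Yb i), Yb i - ybar⟫ := by
        rw [show ybar - Yb i = -(Yb i - ybar) by abel, inner_neg_right]
      have e3 : ⟪ξ i, Yb i - ybar⟫ = -⟪ξ i, ybar - Yb i⟫ := by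
        rw [show Yb i - ybar = -(ybar - Yb i) by abel, inner_neg_right]
      have e4 : ‖ybar - Yb i‖ = ‖Yb i - ybar‖ := norm_sub_rev _ _
      rw [e2, e4] at hd
      rw [e1, e3]
      linarith
    have hsum := Finset.sum_le_sum (s := Finset.univ) (fun i _ => hper i)
    have hsplitL : ∑ i, (f i xb (Yb i) - h (Yb i) - ⟪Gy i xb (Yb i) - ξ i, Yb i - ybar⟫)
        = ∑ i, (f i xb (Yb i) - h (Yb i)) - ∑ i, ⟪Gy i xb (Yb i) - ξ i, Yb i - ybar⟫ :=
      by rw [Finset.sum_sub_distrib]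
    have hsplitR : ∑ i, (f i xb ybar - h ybar + L / 2 * ‖Yb i - ybar‖ ^ 2
          + (h ybar - h (Yb i) - ⟪ξ i, ybar - Yb i⟫))
        = ∑ i, f i xb ybar - (m : ℝ) * h ybar + L / 2 * ∑ i, ‖Yb i - ybar‖ ^ 2
          + ∑ i, (h ybar - h (Yb i) - ⟪ξ i, ybar - Yb i⟫) := by
      rw [Finset.sum_add_distrib, Finset.sum_add_distrib, Finset.sum_sub_distrib,
        Finset.sum_const, Finset.card_univ, Fintype.card_fin, ← Finset.mul_sum]
      simp [nsmul_eq_mul]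
    rw [hsplitL, hsplitR] at hsum
    have h2 := mul_le_mul_of_nonneg_left hsum (by positivity : (0:ℝ) ≤ 1 / (m:ℝ))
    have eqL : (1 / (m:ℝ)) * (∑ i, (f i xb (Yb i) - h (Yb i))
          - ∑ i, ⟪Gy i xb (Yb i) - ξ i, Yb i - ybar⟫)
        = (1 / (m:ℝ)) * ∑ i, (f i xb (Yb i) - h (Yb i))
          - (1 / (m:ℝ)) * ∑ i, ⟪Gy i xb (Yb i) - ξ i, Yb i - ybar⟫ := by ring
    have eqR : (1 / (m:ℝ)) * (∑ i, f i xb ybar - (m : ℝ) * h ybar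
          + L / 2 * ∑ i, ‖Yb i - ybar‖ ^ 2
          + ∑ i, (h ybar - h (Yb i) - ⟪ξ i, ybar - Yb i⟫))
        = ((1 / (m : ℝ)) * ∑ i, f i xb ybar - h ybar)
          + ((L / (2 * (m : ℝ))) * ∑ i, ‖Yb i - ybar‖ ^ 2
            + (1 / (m : ℝ)) * ∑ i, (h ybar - h (Yb i) - ⟪ξ i, ybar - Yb i⟫)) := by
      field_simp
      ring
    rw [eqL, eqR] at h2
    rw [hPhiYb] at h1
    linarith
  -- strong concavity step
  have hkey : ∀ t : ℝ, 0 < t → t ≤ 1 →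
      (μ / 2) * (1 - t) * ‖yh - ybar‖ ^ 2
        ≤ ((1 / (m : ℝ)) * ∑ i, f i xb yh - h yh)
          - ((1 / (m : ℝ)) * ∑ i, f i xb ybar - h ybar) := by
    intro t ht0 ht1
    set z : EuclideanSpace ℝ (Fin n₂) := yh + t • (ybar - yh) with hz
    have hzconv : z = (1 - t) • yh + t • ybar := by rw [hz]; module
    have hnyz2 : ‖yh - z‖ ^ 2 = t ^ 2 * ‖ybar - yh‖ ^ 2 := by
      have hyz : yh - z = (-t) • (ybar - yh) := by rw [hz]; module
      rw [hyz, norm_smul, mul_pow]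
      simp [Real.norm_eq_abs, sq_abs]
    have hnbz2 : ‖ybar - z‖ ^ 2 = (1 - t) ^ 2 * ‖ybar - yh‖ ^ 2 := by
      have hbz : ybar - z = (1 - t) • (ybar - yh) := by rw [hz]; module
      rw [hbz, norm_smul, mul_pow]
      simp [Real.norm_eq_abs, sq_abs]
    have hper2 : ∀ i : Fin m, (1 - t) * f i xb yh + t * f i xb ybar
        ≤ f i xb z - μ / 2 * t * (1 - t) * ‖ybar - yh‖ ^ 2 := by
      intro i
      have h1 := hsconc i z yh
      have h2 := hsconc i z ybar
      rw [hnyz2] at h1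
      rw [hnbz2] at h2
      have e1 : (1 - t) * ⟪Gy i xb z, yh - z⟫ + t * ⟪Gy i xb z, ybar - z⟫ = 0 := by
        have e0 : (1 - t) • (yh - z) + t • (ybar - z) = (0 : EuclideanSpace ℝ (Fin n₂)) := by
          rw [hz]; module
        calc (1 - t) * ⟪Gy i xb z, yh - z⟫ + t * ⟪Gy i xb z, ybar - z⟫
            = ⟪Gy i xb z, (1 - t) • (yh - z) + t • (ybar - z)⟫ := by
              rw [inner_add_right, real_inner_smul_right, real_inner_smul_right]
          _ = 0 := by rw [e0, inner_zero_right]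
      have h1' := mul_le_mul_of_nonneg_left h1 (by linarith : (0:ℝ) ≤ 1 - t)
      have h2' := mul_le_mul_of_nonneg_left h2 ht0.le
      linarith [h1', h2', e1]
    have hsum2 := Finset.sum_le_sum (s := Finset.univ) (fun i _ => hper2 i)
    have hsplit1 : ∑ i, ((1 - t) * f i xb yh + t * f i xb ybar)
        = (1 - t) * ∑ i, f i xb yh + t * ∑ i, f i xb ybar := by
      rw [Finset.sum_add_distrib, Finset.mul_sum, Finset.mul_sum]
    have hsplit2 : ∑ i, (f i xb z - μ / 2 * t * (1 - t) * ‖ybar - yh‖ ^ 2)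
        = ∑ i, f i xb z - (m : ℝ) * (μ / 2 * t * (1 - t) * ‖ybar - yh‖ ^ 2) := by
      rw [Finset.sum_sub_distrib, Finset.sum_const, Finset.card_univ, Fintype.card_fin,
        nsmul_eq_mul]
    rw [hsplit1, hsplit2] at hsum2
    have hdiv := mul_le_mul_of_nonneg_left hsum2 (by positivity : (0:ℝ) ≤ 1 / (m:ℝ))
    have eqL2 : (1 / (m:ℝ)) * ((1 - t) * ∑ i, f i xb yh + t * ∑ i, f i xb ybar)
        = (1 - t) * ((1 / (m:ℝ)) * ∑ i, f i xb yh)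
          + t * ((1 / (m:ℝ)) * ∑ i, f i xb ybar) := by ring
    have eqR2 : (1 / (m:ℝ)) * (∑ i, f i xb z
          - (m : ℝ) * (μ / 2 * t * (1 - t) * ‖ybar - yh‖ ^ 2))
        = (1 / (m:ℝ)) * ∑ i, f i xb z
          - μ / 2 * t * (1 - t) * ‖ybar - yh‖ ^ 2 := by
      field_simp
    rw [eqL2, eqR2] at hdiv
    have hz1 : h z ≤ (1 - t) * h yh + t * h ybar := by
      have := hconv.2 (Set.mem_univ yh) (Set.mem_univ ybar)
        (by linarith : (0:ℝ) ≤ 1 - t) ht0.le (by ring)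
      rw [hzconv]
      exact this
    have hy2 := hyh z
    have hnsub : ‖ybar - yh‖ ^ 2 = ‖yh - ybar‖ ^ 2 := by rw [norm_sub_rev]
    rw [hnsub] at hdiv
    -- combine and divide by t
    have hmul : t * ((μ / 2) * (1 - t) * ‖yh - ybar‖ ^ 2)
        ≤ t * (((1 / (m : ℝ)) * ∑ i, f i xb yh - h yh)
          - ((1 / (m : ℝ)) * ∑ i, f i xb ybar - h ybar)) := by
      linarith [hdiv, hz1, hy2]
    exact le_of_mul_le_mul_left hmul ht0
  -- pass to the limit t → 0⁺
  have hlim : (μ / 2) * ‖yh - ybar‖ ^ 2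
      ≤ ((1 / (m : ℝ)) * ∑ i, f i xb yh - h yh)
        - ((1 / (m : ℝ)) * ∑ i, f i xb ybar - h ybar) := by
    have htt : Filter.Tendsto
        (fun n : ℕ => (μ / 2) * (1 - 1 / ((n:ℝ) + 1)) * ‖yh - ybar‖ ^ 2)
        Filter.atTop (nhds ((μ / 2) * (1 - 0) * ‖yh - ybar‖ ^ 2)) := by
      exact (((tendsto_const_nhds.sub
        tendsto_one_div_add_atTop_nhds_zero_nat).const_mul (μ / 2)).mul_const
        (‖yh - ybar‖ ^ 2))
    have hle : ∀ n : ℕ, (μ / 2) * (1 - 1 / ((n:ℝ) + 1)) * ‖yh - ybar‖ ^ 2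
        ≤ ((1 / (m : ℝ)) * ∑ i, f i xb yh - h yh)
          - ((1 / (m : ℝ)) * ∑ i, f i xb ybar - h ybar) := by
      intro n
      have hn0 : (0:ℝ) < 1 / ((n:ℝ) + 1) := by positivity
      have hn1 : 1 / ((n:ℝ) + 1) ≤ 1 := by
        rw [div_le_one (by positivity)]
        linarith [Nat.cast_nonneg (α := ℝ) n]
      exact hkey _ hn0 hn1
    have := le_of_tendsto htt (Filter.Eventually.of_forall hle)
    simpa using this
  linarith [hlim, hgap]
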